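/- The pair (G(r,d,n), S_n) is a weakly symmetric Gelfand pair: the automorphism f of G(r,d,n) sending (ξ^{a_1}, ..., ξ^{a_n}, σ) to (ξ^{-a_1}, ..., ξ^{-a_n}, σ) satisfies g^{-1} ∈ S_n · f(g) · S_n for all g ∈ G(r,d,n). In particular, the convolution algebra of bi-S_n-invariant functions on G(r,d,n) is commutative. -/

import Mathlib

open SemidirectProduct

/-- The permutation action of `S_n` on `C_r^n` by permuting coordinates. -/
def wreathAut (r n : ℕ) : Equiv.Perm (Fin n) →* MulAut (Fin n → Multiplicative (ZMod r)) where
  toFun σ := MulEquiv.arrowCongr σ (MulEquiv.refl _)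
  map_one' := by ext f i; rfl
  map_mul' σ τ := by ext f i; rfl

/-- The wreath product `G(r,1,n) = C_r ≀ S_n`. -/
abbrev Gr1n (r n : ℕ) := (Fin n → Multiplicative (ZMod r)) ⋊[wreathAut r n] Equiv.Perm (Fin n)

instance (r n : ℕ) [NeZero r] : Finite (Gr1n r n) :=
  Finite.of_injective (fun g => (g.left, g.right))
    (by intro a b h
        exact SemidirectProduct.ext (congrArg Prod.fst h) (congrArg Prod.snd h))

/-- The homomorphism `Φ : G(r,1,n) → C_d`, `(ξ₁,…,ξₙ,σ) ↦ (ξ₁⋯ξₙ)^{r/d}`,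
realised additively with values in `ZMod d`. -/
def PhiHom (r d n : ℕ) (h : d ∣ r) : Gr1n r n →* Multiplicative (ZMod d) where
  toFun g := Multiplicative.ofAdd (ZMod.castHom h (ZMod d) (∑ i, Multiplicative.toAdd (g.left i)))
  map_one' := by simp
  map_mul' g₁ g₂ := by
    have hl : (g₁ * g₂).left = g₁.left * wreathAut r n g₁.right g₂.left :=
      SemidirectProduct.mul_left g₁ g₂
    have hperm : (∑ i, Multiplicative.toAdd (wreathAut r n g₁.right g₂.left i))
        = ∑ i, Multiplicative.toAdd (g₂.left i) := by
      have := Equiv.sum_comp (g₁.right.symm) (fun i => Multiplicative.toAdd (g₂.left i))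
      simpa [wreathAut] using this
    simp [hl, Finset.sum_add_distrib, hperm, map_add]

/-- `S_n` as a subgroup of the wreath product. -/
def SnSub (r n : ℕ) : Subgroup (Gr1n r n) := (inr : Equiv.Perm (Fin n) →* Gr1n r n).range

open scoped Classical

noncomputable instance (r n : ℕ) [NeZero r] : Fintype (Gr1n r n) := Fintype.ofFinite _

/-- Convolution over a subgroup `K` of functions on `G`:
`(f₁ * f₂)(x) = Σ_{t ∈ K} f₁(t) f₂(t⁻¹ x)`. -/
noncomputable def convOn {G : Type*} [Group G] [Fintype G] (K : Subgroup G)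
    (f₁ f₂ : G → ℂ) (x : G) : ℂ :=
  ∑ t : K, f₁ t * f₂ ((t : G)⁻¹ * x)

/-- The inversion map `(ξ^{a₁}, …, ξ^{aₙ}, σ) ↦ (ξ^{-a₁}, …, ξ^{-aₙ}, σ)` on `G(r,1,n)`. -/
def fmap (r n : ℕ) : Gr1n r n → Gr1n r n := fun g => ⟨g.left⁻¹, g.right⟩

section Aux
variable (r n : ℕ)

lemma fmap_mul (g₁ g₂ : Gr1n r n) :
    fmap r n (g₁ * g₂) = fmap r n g₁ * fmap r n g₂ := by
  refine SemidirectProduct.ext ?_ rfl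
  show ((g₁ * g₂).left)⁻¹ = (g₁.left)⁻¹ * wreathAut r n g₁.right (g₂.left)⁻¹
  rw [SemidirectProduct.mul_left, mul_inv, map_inv]

lemma fmap_involutive : Function.Involutive (fmap r n) := fun g =>
  SemidirectProduct.ext (inv_inv _) rfl

lemma key_conj (g : Gr1n r n) :
    g⁻¹ = inr g.right⁻¹ * fmap r n g * inr g.right⁻¹ := by
  refine SemidirectProduct.ext ?_ ?_
  · simp [SemidirectProduct.mul_left, SemidirectProduct.inv_left, fmap]
  · simp [SemidirectProduct.mul_right, SemidirectProduct.inv_right, fmap]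

lemma fmap_inv_eq (x : Gr1n r n) :
    (fmap r n x)⁻¹ = inr x.right⁻¹ * x * inr x.right⁻¹ := by
  rw [← inv_inj, inv_inv, mul_inv_rev, mul_inv_rev, key_conj r n x]
  group

variable (d : ℕ) (h : d ∣ r)

lemma inr_mem_ker (σ : Equiv.Perm (Fin n)) : inr σ ∈ (PhiHom r d n h).ker := by
  simp [MonoidHom.mem_ker, PhiHom]

lemma fmap_mem_ker {g : Gr1n r n} (hg : g ∈ (PhiHom r d n h).ker) :
    fmap r n g ∈ (PhiHom r d n h).ker := by
  simp only [MonoidHom.mem_ker, PhiHom, MonoidHom.coe_mk, OneHom.coe_mk] at hg ⊢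
  have h0 : (ZMod.castHom h (ZMod d)) (∑ i, Multiplicative.toAdd (g.left i)) = 0 := by
    exact Multiplicative.ofAdd.injective hg
  have hs : (∑ i, Multiplicative.toAdd ((fmap r n g).left i))
      = -∑ i, Multiplicative.toAdd (g.left i) := by
    simp [fmap]
  rw [hs, map_neg, h0, neg_zero]
  rfl

end Aux

/-- Abstract commutativity of convolution for a weakly symmetric pair. -/
lemma conv_comm_aux {G : Type*} [Group G] [Fintype G] (K : Subgroup G)
    (φ : G → G) (hmul : ∀ a b : G, φ (a * b) = φ a * φ b)
    (hφK : ∀ g ∈ K, φ g ∈ K)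
    (f₁ f₂ : G → ℂ)
    (h₁inv : ∀ y ∈ K, f₁ y⁻¹ = f₁ (φ y))
    (h₂inv : ∀ y ∈ K, f₂ y⁻¹ = f₂ (φ y))
    (hφinvol : Function.Involutive φ)
    (x : G) (hx : x ∈ K)
    (c : G) (hc : c ∈ K)
    (hxc : (φ x)⁻¹ = c * x * c)
    (hf₁c : ∀ g ∈ K, f₁ (g * c) = f₁ g)
    (hf₂c : ∀ g ∈ K, f₂ (c * g) = f₂ g) :
    convOn K f₁ f₂ x = convOn K f₂ f₁ x := by
  classical
  have hφ1 : φ 1 = 1 := by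
    have h1 : φ 1 * (1 : G) = φ 1 * φ 1 := by rw [mul_one, ← hmul, one_mul]
    exact (mul_left_cancel h1).symm
  have hφinv : ∀ g : G, φ g⁻¹ = (φ g)⁻¹ := fun g =>
    eq_inv_of_mul_eq_one_left (by rw [← hmul, inv_mul_cancel, hφ1])
  let F : K → K := fun t => ⟨φ (t : G), hφK _ t.2⟩
  have hFinv : Function.Involutive F := fun t => Subtype.ext (hφinvol _)
  let eF : Equiv.Perm K := hFinv.toPerm
  let u : K := ⟨φ x, hφK _ hx⟩
  let cK : K := ⟨c, hc⟩
  show ∑ t : K, f₁ (t : G) * f₂ ((t : G)⁻¹ * x)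
      = ∑ t : K, f₂ (t : G) * f₁ ((t : G)⁻¹ * x)
  calc ∑ t : K, f₁ (t : G) * f₂ ((t : G)⁻¹ * x)
      = ∑ t : K, f₁ (((eF t : K) : G)⁻¹) * f₂ ((u : G)⁻¹ * ((eF t : K) : G)) := by
        refine Finset.sum_congr rfl fun t _ => ?_
        have e1 : f₁ (t : G) = f₁ ((φ (t : G))⁻¹) := by
          have h1 := h₁inv ((t : G)⁻¹) (K.inv_mem t.2)
          rw [inv_inv, hφinv] at h1
          exact h1
        have e2 : f₂ ((t : G)⁻¹ * x) = f₂ ((φ x)⁻¹ * φ (t : G)) := by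
          have h2 := h₂inv (x⁻¹ * (t : G)) (K.mul_mem (K.inv_mem hx) t.2)
          rw [mul_inv_rev, inv_inv, hmul, hφinv] at h2
          exact h2
        rw [e1, e2]
        rfl
    _ = ∑ s : K, f₁ ((s : G)⁻¹) * f₂ ((u : G)⁻¹ * (s : G)) :=
        Fintype.sum_equiv eF _ _ (fun t => rfl)
    _ = ∑ w : K, f₁ (((u * w : K) : G)⁻¹) * f₂ ((u : G)⁻¹ * ((u * w : K) : G)) :=
        (Fintype.sum_equiv (Equiv.mulLeft u) _ _ (fun w => rfl)).symm
    _ = ∑ w : K, f₂ (w : G) * f₁ ((w : G)⁻¹ * c * x) := by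
        refine Finset.sum_congr rfl fun w _ => ?_
        have e2 : f₂ ((u : G)⁻¹ * ((u * w : K) : G)) = f₂ (w : G) := by
          congr 1
          push_cast
          group
        have e1 : f₁ (((u * w : K) : G)⁻¹) = f₁ ((w : G)⁻¹ * c * x) := by
          have hcoe : ((u * w : K) : G)⁻¹ = (w : G)⁻¹ * (φ x)⁻¹ := by
            push_cast
            show ((φ x) * (w : G))⁻¹ = (w : G)⁻¹ * (φ x)⁻¹
            rw [mul_inv_rev]
          rw [hcoe, hxc, ← mul_assoc, ← mul_assoc]
          exact hf₁c _ (K.mul_mem (K.mul_mem (K.inv_mem w.2) hc) hx)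
        rw [e1, e2, mul_comm]
    _ = ∑ v : K, f₂ (((cK * v : K) : G)) * f₁ ((((cK * v : K) : G))⁻¹ * c * x) :=
        (Fintype.sum_equiv (Equiv.mulLeft cK) _ _ (fun v => rfl)).symm
    _ = ∑ v : K, f₂ (v : G) * f₁ ((v : G)⁻¹ * x) := by
        refine Finset.sum_congr rfl fun v _ => ?_
        have e2 : f₂ (((cK * v : K) : G)) = f₂ (v : G) := hf₂c _ v.2
        have e1 : f₁ ((((cK * v : K) : G))⁻¹ * c * x) = f₁ ((v : G)⁻¹ * x) := by
          congr 1
          show (c * (v : G))⁻¹ * c * x = (v : G)⁻¹ * x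
          rw [mul_inv_rev]
          group
        rw [e1, e2]

/-- `(G(r,d,n), S_n)` is a weakly symmetric Gelfand pair: the map
`f : (ξ^{a₁},…,ξ^{aₙ},σ) ↦ (ξ^{-a₁},…,ξ^{-aₙ},σ)` is an automorphism of `G(r,d,n)`
satisfying `g⁻¹ ∈ S_n · f(g) · S_n` for all `g ∈ G(r,d,n)`; in particular the convolution
algebra of bi-`S_n`-invariant functions on `G(r,d,n)` is commutative. -/
theorem Grdn_weakly_symmetric_gelfand (r d n : ℕ) [NeZero r] (h : d ∣ r) :
    (∀ g₁ g₂ : Gr1n r n, fmap r n (g₁ * g₂) = fmap r n g₁ * fmap r n g₂) ∧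
    Function.Bijective (fmap r n) ∧
    (∀ g ∈ (PhiHom r d n h).ker, fmap r n g ∈ (PhiHom r d n h).ker) ∧
    (∀ g ∈ (PhiHom r d n h).ker,
      ∃ h₁ ∈ SnSub r n, ∃ h₂ ∈ SnSub r n, g⁻¹ = h₁ * fmap r n g * h₂) ∧
    (∀ f₁ f₂ : Gr1n r n → ℂ,
      (∀ h₁ ∈ SnSub r n, ∀ g ∈ (PhiHom r d n h).ker, ∀ h₂ ∈ SnSub r n,
        f₁ (h₁ * g * h₂) = f₁ g) →
      (∀ h₁ ∈ SnSub r n, ∀ g ∈ (PhiHom r d n h).ker, ∀ h₂ ∈ SnSub r n,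
        f₂ (h₁ * g * h₂) = f₂ g) →
      ∀ x ∈ (PhiHom r d n h).ker,
        convOn (PhiHom r d n h).ker f₁ f₂ x = convOn (PhiHom r d n h).ker f₂ f₁ x) := by
  refine ⟨fmap_mul r n, (fmap_involutive r n).bijective,
    fun g hg => fmap_mem_ker r n d h hg, ?_, ?_⟩
  · intro g hg
    exact ⟨inr g.right⁻¹, ⟨_, rfl⟩, inr g.right⁻¹, ⟨_, rfl⟩, key_conj r n g⟩
  · intro f₁ f₂ hf₁ hf₂ x hx
    have hinv : ∀ (f : Gr1n r n → ℂ),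
        (∀ h₁ ∈ SnSub r n, ∀ g ∈ (PhiHom r d n h).ker, ∀ h₂ ∈ SnSub r n,
          f (h₁ * g * h₂) = f g) →
        ∀ y ∈ (PhiHom r d n h).ker, f y⁻¹ = f (fmap r n y) := by
      intro f hf y hy
      rw [key_conj r n y]
      exact hf _ ⟨_, rfl⟩ _ (fmap_mem_ker r n d h hy) _ ⟨_, rfl⟩
    refine conv_comm_aux _ (fmap r n) (fmap_mul r n) (fun g hg => fmap_mem_ker r n d h hg)
      f₁ f₂ (hinv f₁ hf₁) (hinv f₂ hf₂) (fmap_involutive r n) x hx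
      (inr x.right⁻¹) (inr_mem_ker r n d h _) (fmap_inv_eq r n x) ?_ ?_
    · intro g hg
      have := hf₁ 1 (one_mem _) g hg (inr x.right⁻¹) ⟨_, rfl⟩
      rwa [one_mul] at this
    · intro g hg
      have := hf₂ (inr x.right⁻¹) ⟨_, rfl⟩ g hg 1 (one_mem _)
      rwa [mul_one] at this
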